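/- arXiv:1603.04416 — 2 statements merged into one kernel-verified Lean document; each statement's English description precedes it below -/
import Mathlib

section
/- For every idealised conformity measure A: E_{x,τ}[Σ_{y∈Y} p_A(x,y,τ) − max_y p_A(x,y,τ)] = ∫_0^1 E_{x,τ}[(|Γ_A^ε(x,τ)| − 1)^+] dε. -/
noncomputable section Conformal

open Finset

variable {X Y : Type*} [Fintype X] [Fintype Y] [DecidableEq Y]

/-- The p-value `p_A(x,y,τ) = Q{z : A z < A (x,y)} + τ·Q{z : A z = A (x,y)}`. -/
def pValue (Q A : X × Y → ℝ) (x : X) (y : Y) (τ : ℝ) : ℝ :=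
  (∑ z : X × Y, if A z < A (x, y) then Q z else 0)
    + τ * ∑ z : X × Y, if A z = A (x, y) then Q z else 0

/-- The prediction set `Γ_A^ε(x,τ) = {y : p_A(x,y,τ) > ε}`. -/
def predSet (Q A : X × Y → ℝ) (ε : ℝ) (x : X) (τ : ℝ) : Finset Y :=
  Finset.univ.filter fun y => ε < pValue Q A x y τ

/-- The marginal `Q_X` of `Q` on the object space. -/
def margX (Q : X × Y → ℝ) (x : X) : ℝ := ∑ y, Q (x, y)

/-- The marginal `Q_Y` of `Q` on the label space. -/
def margY (Q : X × Y → ℝ) (y : Y) : ℝ := ∑ x, Q (x, y)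

/-- The conditional probability `Q(y|x)`; as a function of `z = (x,y)` this is the
CP idealised conformity measure. -/
def condQ (Q : X × Y → ℝ) (z : X × Y) : ℝ := Q z / margX Q z.1

/-- Expectation `E_{x,τ}` with `x ~ Q_X` and `τ` uniform on `[0,1]`, independent. -/
def expXT (Q : X × Y → ℝ) (g : X → ℝ → ℝ) : ℝ :=
  ∑ x, margX Q x * ∫ τ in (0:ℝ)..1, g x τ

/-- Expectation `E_{(x,y),τ}` with `(x,y) ~ Q` and `τ` uniform on `[0,1]`, independent. -/
def expZT (Q : X × Y → ℝ) (g : X × Y → ℝ → ℝ) : ℝ :=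
  ∑ z, Q z * ∫ τ in (0:ℝ)..1, g z τ

open Classical in
/-- Probability `Prob_{x,τ}` with `x ~ Q_X` and `τ` uniform on `[0,1]`, independent. -/
def probXT (Q : X × Y → ℝ) (P : X → ℝ → Prop) : ℝ :=
  expXT Q fun x τ => if P x τ then 1 else 0

open Classical in
/-- Probability `Prob_{(x,y),τ}` with `(x,y) ~ Q` and `τ` uniform on `[0,1]`, independent. -/
def probZT (Q : X × Y → ℝ) (P : X × Y → ℝ → Prop) : ℝ :=
  expZT Q fun z τ => if P z τ then 1 else 0

/-- `A` is a refinement of `B`. -/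
def Refines (A B : X × Y → ℝ) : Prop :=
  ∀ z1 z2 : X × Y, B z1 < B z2 → A z1 < A z2

/-- `max_{y' ≠ y} p_A(x,y',τ)`. -/
def maxOther (Q A : X × Y → ℝ) (x : X) (y : Y) (τ : ℝ) : ℝ :=
  ⨆ y' : {y' : Y // y' ≠ y}, pValue Q A x y'.1 τ

/-- The unconfidence `min_y max_{y' ≠ y} p_A(x,y',τ)`. -/
def unconf (Q A : X × Y → ℝ) (x : X) (τ : ℝ) : ℝ := ⨅ y : Y, maxOther Q A x y τ

/-- The credibility `max_y p_A(x,y,τ)`. -/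
def maxPV (Q A : X × Y → ℝ) (x : X) (τ : ℝ) : ℝ := ⨆ y : Y, pValue Q A x y τ

/-- The predictability `f(x) = max_y Q(y|x)`. -/
def predictability (Q : X × Y → ℝ) (x : X) : ℝ := ⨆ y : Y, condQ Q (x, y)

/-- `c` is a choice function: `Q(c x | x) = f(x)` for all `x`. -/
def IsChoiceFun (Q : X × Y → ℝ) (c : X → Y) : Prop :=
  ∀ x, condQ Q (x, c x) = predictability Q x

/-- The signed predictability (SP) idealised conformity measure corresponding to `c`. -/
def SPMeasure (Q : X × Y → ℝ) (c : X → Y) : X × Y → ℝ := fun z =>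
  if z.2 = c z.1 then predictability Q z.1 else -predictability Q z.1

/-- The modified conditional probability (MCP) idealised conformity measure
corresponding to `c`. -/
def MCPMeasure (Q : X × Y → ℝ) (c : X → Y) : X × Y → ℝ := fun z =>
  if z.2 = c z.1 then condQ Q z else condQ Q z - 1

/-- The modified signed predictability (MSP) idealised conformity measure
(independent of the choice function: `y = ŷ(x)` iff `Q(y|x) = f(x)` when `f(x) > 1/2`). -/
def MSPMeasure (Q : X × Y → ℝ) : X × Y → ℝ := fun z =>
  if 1 / 2 < predictability Q z.1 then
    if condQ Q z = predictability Q z.1 then predictability Q z.1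
    else -predictability Q z.1
  else 0

/-- S-optimality. -/
def SOpt (Q A : X × Y → ℝ) : Prop :=
  ∀ B : X × Y → ℝ,
    expXT Q (fun x τ => ∑ y, pValue Q A x y τ)
      ≤ expXT Q (fun x τ => ∑ y, pValue Q B x y τ)

/-- N-optimality. -/
def NOpt (Q A : X × Y → ℝ) : Prop :=
  ∀ B : X × Y → ℝ, ∀ ε ∈ Set.Ioo (0:ℝ) 1,
    expXT Q (fun x τ => ((predSet Q A ε x τ).card : ℝ))
      ≤ expXT Q (fun x τ => ((predSet Q B ε x τ).card : ℝ))

/-- OF-optimality. -/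
def OFOpt (Q A : X × Y → ℝ) : Prop :=
  ∀ B : X × Y → ℝ,
    expZT Q (fun z τ => ∑ y' ∈ Finset.univ.erase z.2, pValue Q A z.1 y' τ)
      ≤ expZT Q (fun z τ => ∑ y' ∈ Finset.univ.erase z.2, pValue Q B z.1 y' τ)

/-- OE-optimality. -/
def OEOpt (Q A : X × Y → ℝ) : Prop :=
  ∀ B : X × Y → ℝ, ∀ ε ∈ Set.Ioo (0:ℝ) 1,
    expZT Q (fun z τ => (((predSet Q A ε z.1 τ).erase z.2).card : ℝ))
      ≤ expZT Q (fun z τ => (((predSet Q B ε z.1 τ).erase z.2).card : ℝ))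

/-- U-optimality. -/
def UOpt (Q A : X × Y → ℝ) : Prop :=
  ∀ B : X × Y → ℝ,
    expXT Q (unconf Q A) < expXT Q (unconf Q B) ∨
      (expXT Q (unconf Q A) = expXT Q (unconf Q B) ∧
        expXT Q (maxPV Q A) ≤ expXT Q (maxPV Q B))

/-- M-optimality. -/
def MOpt (Q A : X × Y → ℝ) : Prop :=
  ∀ B : X × Y → ℝ, ∀ ε ∈ Set.Ioo (0:ℝ) 1,
    probXT Q (fun x τ => 1 < (predSet Q A ε x τ).card)
        < probXT Q (fun x τ => 1 < (predSet Q B ε x τ).card) ∨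
      (probXT Q (fun x τ => 1 < (predSet Q A ε x τ).card)
          = probXT Q (fun x τ => 1 < (predSet Q B ε x τ).card) ∧
        probXT Q (fun x τ => (predSet Q B ε x τ).card = 0)
          ≤ probXT Q (fun x τ => (predSet Q A ε x τ).card = 0))

/-- F-optimality. -/
def FOpt (Q A : X × Y → ℝ) : Prop :=
  ∀ B : X × Y → ℝ,
    expXT Q (fun x τ => (∑ y, pValue Q A x y τ) - maxPV Q A x τ)
        < expXT Q (fun x τ => (∑ y, pValue Q B x y τ) - maxPV Q B x τ) ∨
      (expXT Q (fun x τ => (∑ y, pValue Q A x y τ) - maxPV Q A x τ)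
          = expXT Q (fun x τ => (∑ y, pValue Q B x y τ) - maxPV Q B x τ) ∧
        expXT Q (maxPV Q A) ≤ expXT Q (maxPV Q B))

/-- E-optimality. -/
def EOpt (Q A : X × Y → ℝ) : Prop :=
  ∀ B : X × Y → ℝ, ∀ ε ∈ Set.Ioo (0:ℝ) 1,
    expXT Q (fun x τ => max (((predSet Q A ε x τ).card : ℝ) - 1) 0)
        < expXT Q (fun x τ => max (((predSet Q B ε x τ).card : ℝ) - 1) 0) ∨
      (expXT Q (fun x τ => max (((predSet Q A ε x τ).card : ℝ) - 1) 0)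
          = expXT Q (fun x τ => max (((predSet Q B ε x τ).card : ℝ) - 1) 0) ∧
        probXT Q (fun x τ => (predSet Q B ε x τ).card = 0)
          ≤ probXT Q (fun x τ => (predSet Q A ε x τ).card = 0))

/-- OU-optimality. -/
def OUOpt (Q A : X × Y → ℝ) : Prop :=
  ∀ B : X × Y → ℝ,
    expZT Q (fun z τ => maxOther Q A z.1 z.2 τ)
      ≤ expZT Q (fun z τ => maxOther Q B z.1 z.2 τ)

/-- OM-optimality. -/
def OMOpt (Q A : X × Y → ℝ) : Prop :=
  ∀ B : X × Y → ℝ, ∀ ε ∈ Set.Ioo (0:ℝ) 1,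
    probZT Q (fun z τ => ((predSet Q A ε z.1 τ).erase z.2).Nonempty)
      ≤ probZT Q (fun z τ => ((predSet Q B ε z.1 τ).erase z.2).Nonempty)

end Conformal

open MeasureTheory Finset

lemma ind_val {c : ℝ} (h0 : 0 ≤ c) (h1 : c ≤ 1) :
    ∫ ε in (0:ℝ)..1, (if ε < c then (1:ℝ) else 0) = c := by
  have he : (fun ε => if ε < c then (1:ℝ) else 0) = Set.indicator (Set.Iio c) (fun _ => 1) := by
    ext ε; simp [Set.indicator_apply]
  rw [intervalIntegral.integral_of_le zero_le_one, he,
    MeasureTheory.setIntegral_indicator measurableSet_Iio]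
  have hs : Set.Ioc (0:ℝ) 1 ∩ Set.Iio c = Set.Ioo 0 c := by
    ext ε; simp only [Set.mem_inter_iff, Set.mem_Ioc, Set.mem_Iio, Set.mem_Ioo]
    constructor
    · rintro ⟨⟨h1', h2⟩, h3⟩; exact ⟨h1', h3⟩
    · rintro ⟨h1', h2⟩; exact ⟨⟨h1', by linarith⟩, h2⟩
  rw [hs, MeasureTheory.setIntegral_const, smul_eq_mul, mul_one, Real.volume_real_Ioo_of_le h0]
  ring
lemma ind_intble (c : ℝ) : IntervalIntegrable (fun ε => if ε < c then (1:ℝ) else 0) volume 0 1 := by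
  have he : (fun ε => if ε < c then (1:ℝ) else 0) = Set.indicator (Set.Iio c) (fun _ => 1) := by
    ext ε; simp [Set.indicator_apply]
  rw [he, intervalIntegrable_iff]
  exact (MeasureTheory.integrableOn_const (by simp)).indicator measurableSet_Iio

lemma key_int {Y : Type*} [Fintype Y] [Nonempty Y] (p : Y → ℝ)
    (h0 : ∀ y, 0 ≤ p y) (h1 : ∀ y, p y ≤ 1) :
    (∫ ε in (0:ℝ)..1, max (((Finset.univ.filter fun y => ε < p y).card : ℝ) - 1) 0)
      = (∑ y, p y) - ⨆ y, p y := by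
  obtain ⟨y₀, hy₀⟩ : ∃ y₀, p y₀ = ⨆ y, p y := exists_eq_ciSup_of_finite
  set M := ⨆ y, p y with hM
  have hle : ∀ y, p y ≤ M := fun y => le_ciSup (Set.Finite.bddAbove (Set.finite_range p)) y
  have hpt : ∀ ε : ℝ, max (((Finset.univ.filter fun y => ε < p y).card : ℝ) - 1) 0
      = (∑ y, if ε < p y then (1:ℝ) else 0) - (if ε < M then 1 else 0) := by
    intro ε
    have hcard : ((Finset.univ.filter fun y => ε < p y).card : ℝ)
        = ∑ y, if ε < p y then (1:ℝ) else 0 := by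
      rw [Finset.card_filter]; push_cast; rfl
    by_cases h : ∃ y, ε < p y
    · obtain ⟨y, hy⟩ := h
      have hεM : ε < M := lt_of_lt_of_le hy (hle y)
      have hne : (Finset.univ.filter fun y => ε < p y).Nonempty := ⟨y, by simp [hy]⟩
      have hc1 : 1 ≤ (Finset.univ.filter fun y => ε < p y).card := Finset.card_pos.2 hne
      rw [if_pos hεM, ← hcard, max_eq_left (by exact_mod_cast by omega : (0:ℝ) ≤ _ - 1)]
    · push_neg at h
      have hεM : ¬ ε < M := not_lt.2 (hy₀ ▸ h y₀)
      have hemp : (Finset.univ.filter fun y => ε < p y) = ∅ := by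
        apply Finset.filter_eq_empty_iff.2; intro y _; exact not_lt.2 (h y)
      rw [if_neg hεM, hemp]
      simp only [Finset.card_empty, Nat.cast_zero, zero_sub]
      rw [Finset.sum_eq_zero (fun y _ => if_neg (not_lt.2 (h y)))]
      simp
  rw [intervalIntegral.integral_congr (g := fun ε =>
      (∑ y, if ε < p y then (1:ℝ) else 0) - (if ε < M then 1 else 0)) (fun ε _ => hpt ε)]
  have hsum : IntervalIntegrable (fun ε => ∑ y, if ε < p y then (1:ℝ) else 0) volume 0 1 := by
    rw [intervalIntegrable_iff]
    exact MeasureTheory.integrable_finset_sum _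
      (fun y _ => intervalIntegrable_iff.1 (ind_intble (p y)))
  rw [intervalIntegral.integral_sub hsum (ind_intble M),
    intervalIntegral.integral_finset_sum (fun y _ => ind_intble (p y)),
    ind_val (hy₀ ▸ h0 y₀) (hy₀ ▸ h1 y₀)]
  congr 1
  exact Finset.sum_congr rfl fun y _ => ind_val (h0 y) (h1 y)


section helpers
variable {X Y : Type*} [Fintype X] [Fintype Y] [DecidableEq Y]

lemma pValue_nonneg (Q A : X × Y → ℝ) (hQ0 : ∀ z, 0 ≤ Q z) (x : X) (y : Y) {τ : ℝ}
    (hτ : 0 ≤ τ) : 0 ≤ pValue Q A x y τ := by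
  unfold pValue
  have h1 : (0:ℝ) ≤ ∑ z : X × Y, if A z < A (x, y) then Q z else 0 :=
    Finset.sum_nonneg fun z _ => by split <;> simp [hQ0 z]
  have h2 : (0:ℝ) ≤ ∑ z : X × Y, if A z = A (x, y) then Q z else 0 :=
    Finset.sum_nonneg fun z _ => by split <;> simp [hQ0 z]
  positivity

lemma pValue_le_one (Q A : X × Y → ℝ) (hQ0 : ∀ z, 0 ≤ Q z)
    (hQ1 : ∑ z : X × Y, Q z = 1) (x : X) (y : Y) {τ : ℝ} (hτ0 : 0 ≤ τ) (hτ1 : τ ≤ 1) :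
    pValue Q A x y τ ≤ 1 := by
  unfold pValue
  have h2 : (0:ℝ) ≤ ∑ z : X × Y, if A z = A (x, y) then Q z else 0 :=
    Finset.sum_nonneg fun z _ => by split <;> simp [hQ0 z]
  have key : (∑ z : X × Y, if A z < A (x, y) then Q z else 0)
      + (∑ z : X × Y, if A z = A (x, y) then Q z else 0) ≤ 1 := by
    rw [← Finset.sum_add_distrib, ← hQ1]
    apply Finset.sum_le_sum
    intro z _
    split_ifs <;> first | linarith [hQ0 z] | simp [hQ0 z]
  nlinarith

lemma card_predSet_eq (Q A : X × Y → ℝ) (x : X) (ε τ : ℝ) :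
    ((predSet Q A ε x τ).card : ℝ) = ∑ y : Y, if ε < pValue Q A x y τ then (1:ℝ) else 0 := by
  rw [predSet, Finset.card_filter]; push_cast; rfl

lemma Fmeas (Q A : X × Y → ℝ) (x : X) :
    Measurable (fun q : ℝ × ℝ => max (((predSet Q A q.1 x q.2).card : ℝ) - 1) 0) := by
  have : (fun q : ℝ × ℝ => max (((predSet Q A q.1 x q.2).card : ℝ) - 1) 0)
      = fun q : ℝ × ℝ => max ((∑ y : Y, if q.1 < pValue Q A x y q.2 then (1:ℝ) else 0) - 1) 0 := by
    funext q; rw [card_predSet_eq]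
  rw [this]
  apply Measurable.max _ measurable_const
  apply Measurable.sub _ measurable_const
  apply Finset.measurable_sum
  intro y _
  apply Measurable.ite _ measurable_const measurable_const
  have : {q : ℝ × ℝ | q.1 < pValue Q A x y q.2}
      = {q : ℝ × ℝ | q.1 < (∑ z : X × Y, if A z < A (x, y) then Q z else 0)
          + q.2 * ∑ z : X × Y, if A z = A (x, y) then Q z else 0} := rfl
  rw [this]
  exact measurableSet_lt measurable_fst (measurable_const.add (measurable_snd.mul_const _))

lemma Fintble (Q A : X × Y → ℝ) (x : X) :
    Integrable (fun q : ℝ × ℝ => max (((predSet Q A q.1 x q.2).card : ℝ) - 1) 0)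
      ((volume.restrict (Set.Ioc (0:ℝ) 1)).prod (volume.restrict (Set.Ioc (0:ℝ) 1))) := by
  haveI : IsFiniteMeasure (volume.restrict (Set.Ioc (0:ℝ) 1)) :=
    ⟨by rw [Measure.restrict_apply_univ]; simp⟩
  apply (integrable_const ((Fintype.card Y : ℝ))).mono' (Fmeas Q A x).aestronglyMeasurable
  apply Filter.Eventually.of_forall
  intro q
  rw [Real.norm_eq_abs, abs_of_nonneg (le_max_right _ _)]
  apply max_le
  · have : (predSet Q A q.1 x q.2).card ≤ Fintype.card Y := by
      rw [← Finset.card_univ]; exact Finset.card_filter_le _ _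
    have := (Nat.cast_le (α := ℝ)).2 this
    linarith
  · positivity
end helpers

section main
variable {X Y : Type*} [Fintype X] [Fintype Y] [DecidableEq Y]

lemma perx (Q A : X × Y → ℝ) [Nonempty Y] (hQ0 : ∀ z, 0 ≤ Q z)
    (hQ1 : ∑ z : X × Y, Q z = 1) (x : X) :
    (∫ τ in (0:ℝ)..1, ((∑ y, pValue Q A x y τ) - maxPV Q A x τ))
      = ∫ ε in (0:ℝ)..1, ∫ τ in (0:ℝ)..1,
          max (((predSet Q A ε x τ).card : ℝ) - 1) 0 := by
  have step1 : (∫ τ in (0:ℝ)..1, ((∑ y, pValue Q A x y τ) - maxPV Q A x τ))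
      = ∫ τ in (0:ℝ)..1, ∫ ε in (0:ℝ)..1,
          max (((predSet Q A ε x τ).card : ℝ) - 1) 0 := by
    apply intervalIntegral.integral_congr
    intro τ hτ
    rw [Set.uIcc_of_le zero_le_one, Set.mem_Icc] at hτ
    have := (key_int (fun y => pValue Q A x y τ)
      (fun y => pValue_nonneg Q A hQ0 x y hτ.1)
      (fun y => pValue_le_one Q A hQ0 hQ1 x y hτ.1 hτ.2)).symm
    simpa [predSet, maxPV] using this
  rw [step1]
  have hswap := MeasureTheory.integral_integral_swap
    (f := fun τ ε => max (((predSet Q A ε x τ).card : ℝ) - 1) 0)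
    (μ := volume.restrict (Set.Ioc (0:ℝ) 1)) (ν := volume.restrict (Set.Ioc (0:ℝ) 1))
    ((Fintble Q A x).swap)
  simp only [intervalIntegral.integral_of_le zero_le_one]
  exact hswap

lemma perx_intble (Q A : X × Y → ℝ) (x : X) :
    IntervalIntegrable (fun ε => ∫ τ in (0:ℝ)..1,
      max (((predSet Q A ε x τ).card : ℝ) - 1) 0) volume 0 1 := by
  have h := (Fintble Q A x).integral_prod_left
  rw [intervalIntegrable_iff_integrableOn_Ioc_of_le zero_le_one]
  simp only [intervalIntegral.integral_of_le zero_le_one]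
  exact h
end main


/-- `E_(x,τ)[Σ_y p_A − max_y p_A] = ∫_0^1 E_(x,τ)[(|Γ^ε| − 1)⁺] dε`. -/
theorem stmt15 {X Y : Type*} [Fintype X] [Fintype Y] [DecidableEq Y] [Nonempty X]
    (hY : 2 ≤ Fintype.card Y) (Q : X × Y → ℝ) (hQ0 : ∀ z, 0 ≤ Q z)
    (hQ1 : ∑ z : X × Y, Q z = 1) (hQX : ∀ x, 0 < margX Q x) (A : X × Y → ℝ) :
    expXT Q (fun x τ => (∑ y, pValue Q A x y τ) - maxPV Q A x τ)
      = ∫ ε in (0:ℝ)..1,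
          expXT Q (fun x τ => max (((predSet Q A ε x τ).card : ℝ) - 1) 0) := by
  haveI : Nonempty Y := Fintype.card_pos_iff.mp (by omega)
  unfold expXT
  rw [intervalIntegral.integral_finset_sum
    (fun x _ => (perx_intble Q A x).const_mul (margX Q x))]
  refine Finset.sum_congr rfl fun x _ => ?_
  rw [intervalIntegral.integral_const_mul, perx Q A hQ0 hQ1 x]
end

section
/- Let φ : [0,1] → ℝ be continuously differentiable and strictly increasing. Then an idealised conformity measure A is S_φ-optimal if and only if A is a refinement of the CP idealised conformity measure; that is, O(S_φ) = R(CP). -/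
namespace CPAux

open Finset MeasureTheory Set intervalIntegral

/-- clamp: measure of `{τ ∈ [0,1] : L + τM > ε}` (convention `ε ≤ L → 1` when `M = 0`). -/
noncomputable def uu (L M ε : ℝ) : ℝ :=
  if M = 0 then (if ε ≤ L then 1 else 0) else min 1 (max 0 ((L + M - ε) / M))

lemma uu_nonneg (L M ε : ℝ) : 0 ≤ uu L M ε := by
  unfold uu; split_ifs
  · norm_num
  · norm_num
  · exact le_min (by norm_num) (le_max_left _ _)

lemma uu_le_one (L M ε : ℝ) : uu L M ε ≤ 1 := by
  unfold uu; split_ifs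
  · norm_num
  · norm_num
  · exact min_le_left _ _

lemma uu_eq_one {L M ε : ℝ} (hM : 0 ≤ M) (h : ε ≤ L) : uu L M ε = 1 := by
  unfold uu
  by_cases h1 : M = 0
  · rw [if_pos h1, if_pos h]
  · have hM' : 0 < M := lt_of_le_of_ne hM (fun e => h1 e.symm)
    have h3 : (1:ℝ) ≤ (L + M - ε) / M := by rw [le_div_iff₀ hM']; nlinarith
    rw [if_neg h1, min_eq_left (le_max_of_le_right h3)]

lemma uu_eq_zero {L M ε : ℝ} (hM : 0 ≤ M) (h : L + M < ε) : uu L M ε = 0 := by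
  unfold uu
  by_cases h1 : M = 0
  · rw [if_pos h1, if_neg (by rw [h1] at h; push_neg; linarith)]
  · have hM' : 0 < M := lt_of_le_of_ne hM (fun e => h1 e.symm)
    have h3 : (L + M - ε) / M ≤ 0 := div_nonpos_of_nonpos_of_nonneg (by linarith) hM
    rw [if_neg h1, max_eq_left h3, min_eq_right (by norm_num)]

lemma uu_antitone (L M : ℝ) (hM : 0 ≤ M) : Antitone (uu L M) := by
  intro a b hab
  unfold uu
  by_cases h : M = 0
  · rw [if_pos h, if_pos h]
    by_cases h1 : b ≤ L
    · rw [if_pos h1, if_pos (le_trans hab h1)]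
    · rw [if_neg h1]
      split_ifs <;> norm_num
  · have hM' : 0 < M := lt_of_le_of_ne hM (fun e => h e.symm)
    rw [if_neg h, if_neg h]
    refine min_le_min le_rfl (max_le_max le_rfl ?_)
    gcongr

/-- `uu ≥ min 1 (L + M - ε)` when `0 ≤ M ≤ 1`. -/
lemma uu_ge {L M ε : ℝ} (hM : 0 ≤ M) (hM1 : M ≤ 1) : min 1 (L + M - ε) ≤ uu L M ε := by
  unfold uu
  by_cases h : M = 0
  · rw [if_pos h]
    by_cases h2 : ε ≤ L
    · rw [if_pos h2]; exact min_le_left _ _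
    · rw [if_neg h2]
      push_neg at h2
      have : L + M - ε < 0 := by rw [h]; linarith
      exact le_trans (min_le_right _ _) (by linarith)
  · have hM' : 0 < M := lt_of_le_of_ne hM (fun e => h e.symm)
    rw [if_neg h]
    rcases le_total (L + M - ε) 0 with h3 | h3
    · exact le_trans (min_le_right _ _) (le_trans h3 (le_min zero_le_one (le_max_left _ _)))
    · have h4 : L + M - ε ≤ (L + M - ε) / M := by
        rw [le_div_iff₀ hM']; nlinarith
      exact le_min (min_le_left _ _) (le_trans (min_le_right _ _)
        (le_trans h4 (le_max_right _ _)))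

/-- `uu ≤ (L + M - ε)/M'` when `0 < M' ≤ M` and `ε ≤ L + M`. -/
lemma uu_le_div {L M M' ε : ℝ} (hM' : 0 < M') (hMM : M' ≤ M) (hU : ε ≤ L + M) :
    uu L M ε ≤ (L + M - ε) / M' := by
  have hM : 0 < M := lt_of_lt_of_le hM' hMM
  unfold uu
  rw [if_neg (ne_of_gt hM)]
  refine le_trans (min_le_right _ _) ?_
  rw [max_le_iff]
  constructor
  · exact div_nonneg (by linarith) hM'.le
  · exact div_le_div_of_nonneg_left (by linarith) hM' hMM

lemma mul_uu (L M ε : ℝ) (hM : 0 ≤ M) :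
    M * uu L M ε = max (L + M - ε) 0 - max (L - ε) 0 := by
  unfold uu
  by_cases h : M = 0
  · rw [h]; simp
  · have hM' : 0 < M := lt_of_le_of_ne hM (fun e => h e.symm)
    rw [if_neg h]
    rcases le_total ε L with h1 | h1
    · have h3 : (1:ℝ) ≤ (L + M - ε) / M := by rw [le_div_iff₀ hM']; nlinarith
      rw [min_eq_left (le_max_of_le_right h3),
        max_eq_left (show (0:ℝ) ≤ L + M - ε by linarith),
        max_eq_left (show (0:ℝ) ≤ L - ε by linarith)]
      ring
    · rw [max_eq_right (show L - ε ≤ (0:ℝ) by linarith)]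
      rcases le_total (L + M) ε with h4 | h4
      · have h3 : (L + M - ε) / M ≤ 0 := div_nonpos_of_nonpos_of_nonneg (by linarith) hM
        rw [max_eq_left h3, min_eq_right (by norm_num),
          max_eq_right (show L + M - ε ≤ (0:ℝ) by linarith)]
        ring
      · have h3 : (0:ℝ) ≤ (L + M - ε) / M := div_nonneg (by linarith) hM
        have h5 : (L + M - ε) / M ≤ 1 := by rw [div_le_one hM']; nlinarith
        rw [max_eq_right h3, min_eq_right h5,
          max_eq_left (show (0:ℝ) ≤ L + M - ε by linarith)]
        field_simp
        ring


lemma uu_mid {L M ε : ℝ} (hM : 0 < M) (h1 : L ≤ ε) (h2 : ε ≤ L + M) :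
    uu L M ε = (L + M - ε) / M := by
  unfold uu
  rw [if_neg (ne_of_gt hM)]
  have h3 : (0:ℝ) ≤ (L + M - ε) / M := div_nonneg (by linarith) hM.le
  have h4 : (L + M - ε) / M ≤ 1 := by rw [div_le_one hM]; linarith
  rw [max_eq_right h3, min_eq_right h4]

lemma uu_hi {L M ε : ℝ} (hM : 0 < M) (h2 : L + M ≤ ε) : uu L M ε = 0 := by
  unfold uu
  rw [if_neg (ne_of_gt hM)]
  have h3 : (L + M - ε) / M ≤ 0 := div_nonpos_of_nonpos_of_nonneg (by linarith) hM.le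
  rw [max_eq_left h3, min_eq_right (by norm_num)]


open Classical in
/-- telescoping sums over a finite set of values -/
lemma telescope (g : ℝ → ℝ) (s : Finset ℝ) (f : ℝ → ℝ) :
    ∑ v ∈ s, (g ((∑ u ∈ s.filter (· < v), f u) + f v) - g (∑ u ∈ s.filter (· < v), f u))
      = g (∑ v ∈ s, f v) - g 0 := by
  classical
  induction s using Finset.induction_on_max with
  | empty => simp
  | insert a s ha ih =>
    have hans : a ∉ s := fun h => lt_irrefl a (ha a h)
    rw [Finset.sum_insert hans]
    have h1 : ∀ v ∈ s, (insert a s).filter (· < v) = s.filter (· < v) := by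
      intro v hv
      rw [Finset.filter_insert, if_neg (by exact fun h => absurd (lt_trans h (ha v hv)) (lt_irrefl a))]
    have h2 : (insert a s).filter (· < a) = s := by
      rw [Finset.filter_insert, if_neg (lt_irrefl a)]
      exact Finset.filter_true_of_mem (fun x hx => ha x hx)
    rw [h2]
    have h3 : (∑ v ∈ s, (g ((∑ u ∈ (insert a s).filter (· < v), f u) + f v)
        - g (∑ u ∈ (insert a s).filter (· < v), f u)))
        = ∑ v ∈ s, (g ((∑ u ∈ s.filter (· < v), f u) + f v) - g (∑ u ∈ s.filter (· < v), f u)) :=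
      Finset.sum_congr rfl (fun v hv => by rw [h1 v hv])
    rw [h3, ih, Finset.sum_insert hans, add_comm (f a) (∑ u ∈ s, f u)]
    ring



variable {Z : Type*} [Fintype Z]

open Classical in
noncomputable def Lv (q B : Z → ℝ) (v : ℝ) : ℝ := ∑ z, if B z < v then q z else 0
open Classical in
noncomputable def Mvv (q B : Z → ℝ) (v : ℝ) : ℝ := ∑ z, if B z = v then q z else 0
noncomputable def uZ (q B : Z → ℝ) (z : Z) (ε : ℝ) : ℝ := uu (Lv q B (B z)) (Mvv q B (B z)) ε
noncomputable def NZ (q w B : Z → ℝ) (ε : ℝ) : ℝ := ∑ z, w z * uZ q B z ε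

variable {q w B r : Z → ℝ}

open Classical in
lemma sum_ite_mono (q : Z → ℝ) (hq0 : ∀ z, 0 ≤ q z) {P R : Z → Prop}
    (h : ∀ z, P z → R z) :
    ∑ z, (if P z then q z else 0) ≤ ∑ z, (if R z then q z else 0) := by
  classical
  refine Finset.sum_le_sum (fun z _ => ?_)
  by_cases hp : P z
  · rw [if_pos hp, if_pos (h z hp)]
  · rw [if_neg hp]
    split_ifs
    · exact hq0 z
    · exact le_rfl

lemma Lv_nonneg (hq0 : ∀ z, 0 ≤ q z) (v : ℝ) : 0 ≤ Lv (B := B) q v :=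
  Finset.sum_nonneg fun z _ => by split_ifs; exacts [hq0 z, le_rfl]

lemma Mv_nonneg (hq0 : ∀ z, 0 ≤ q z) (v : ℝ) : 0 ≤ Mvv (B := B) q v :=
  Finset.sum_nonneg fun z _ => by split_ifs; exacts [hq0 z, le_rfl]

open Classical in
lemma Lv_add_Mv (q B : Z → ℝ) (v : ℝ) :
    Lv q B v + Mvv q B v = ∑ z, if B z ≤ v then q z else 0 := by
  classical
  rw [Lv, Mvv, ← Finset.sum_add_distrib]
  refine Finset.sum_congr rfl fun z _ => ?_
  rcases lt_trichotomy (B z) v with h | h | h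
  · rw [if_pos h, if_neg (ne_of_lt h), if_pos (le_of_lt h), add_zero]
  · rw [if_neg (by rw [h]; exact lt_irrefl v), if_pos h, if_pos (le_of_eq h), zero_add]
  · rw [if_neg (asymm h), if_neg (ne_of_gt h), if_neg (not_le.mpr h), add_zero]

lemma LM_le_total (hq0 : ∀ z, 0 ≤ q z) (v : ℝ) :
    Lv (B := B) q v + Mvv (B := B) q v ≤ ∑ z, q z := by
  classical
  rw [Lv_add_Mv]
  refine Finset.sum_le_sum fun z _ => ?_
  split_ifs
  · exact le_rfl
  · exact hq0 z

open Classical in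
/-- grouping by fibers of `B`. -/
lemma group_sum (q B : Z → ℝ) (F : ℝ → ℝ) :
    ∑ z, q z * F (B z) = ∑ v ∈ Finset.image B Finset.univ, Mvv q B v * F v := by
  classical
  have h := Finset.sum_fiberwise_of_maps_to (s := (Finset.univ : Finset Z)) (g := B)
    (t := Finset.image B Finset.univ)
    (fun z _ => Finset.mem_image_of_mem B (Finset.mem_univ z)) (fun z => q z * F (B z))
  rw [← h]
  refine Finset.sum_congr rfl fun v hv => ?_
  rw [Mvv, Finset.sum_mul, Finset.sum_filter]
  refine Finset.sum_congr rfl fun z _ => ?_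
  split_ifs with h2
  · rw [h2]
  · simp

open Classical in
lemma Lv_eq_filter (q B : Z → ℝ) (v : ℝ) :
    Lv q B v = ∑ u ∈ (Finset.image B Finset.univ).filter (· < v), Mvv q B u := by
  classical
  have h : ∀ u ∈ Finset.image B Finset.univ, Mvv q B u * (if u < v then 1 else 0)
      = if u < v then Mvv q B u else 0 := by
    intro u _; split_ifs <;> simp
  have h2 := group_sum q B (fun u => if u < v then 1 else 0)
  rw [Lv]
  calc ∑ z, (if B z < v then q z else 0) = ∑ z, q z * (if B z < v then 1 else 0) := by
        refine Finset.sum_congr rfl fun z _ => ?_; split_ifs <;> simp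
    _ = ∑ u ∈ (Finset.image B Finset.univ), (if u < v then Mvv q B u else 0) := by
        rw [h2]; exact Finset.sum_congr rfl h
    _ = _ := by rw [Finset.sum_filter]

open Classical in
lemma total_mass (q B : Z → ℝ) : ∑ v ∈ Finset.image B Finset.univ, Mvv q B v = ∑ z, q z := by
  have := group_sum q B (fun _ => 1)
  simpa using this.symm

/-- exact validity -/
lemma validity (hq0 : ∀ z, 0 ≤ q z) (hq1 : ∑ z, q z = 1) (B : Z → ℝ) {ε : ℝ}
    (hε0 : 0 ≤ ε) (hε1 : ε ≤ 1) :
    ∑ z, q z * uZ q B z ε = 1 - ε := by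
  classical
  have h1 : ∑ z, q z * uZ q B z ε
      = ∑ v ∈ Finset.image B Finset.univ, Mvv q B v * uu (Lv q B v) (Mvv q B v) ε :=
    group_sum q B (fun v => uu (Lv q B v) (Mvv q B v) ε)
  rw [h1]
  have h2 : ∀ v ∈ Finset.image B Finset.univ,
      Mvv q B v * uu (Lv q B v) (Mvv q B v) ε
      = max ((∑ u ∈ (Finset.image B Finset.univ).filter (· < v), Mvv q B u) + Mvv q B v - ε) 0
        - max ((∑ u ∈ (Finset.image B Finset.univ).filter (· < v), Mvv q B u) - ε) 0 := by
    intro v _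
    rw [← Lv_eq_filter, mul_uu _ _ _ (Mv_nonneg hq0 v)]
  rw [Finset.sum_congr rfl h2]
  have h3 := telescope (fun t => max (t - ε) 0) (Finset.image B Finset.univ) (Mvv q B)
  simp only at h3
  rw [h3, total_mass, hq1]
  rw [max_eq_right (show (0:ℝ) - ε ≤ 0 by linarith),
    max_eq_left (show (0:ℝ) ≤ 1 - ε by linarith)]
  ring


/-- existence of the cut level -/
lemma exists_cut [Nonempty Z] (hq0 : ∀ z, 0 ≤ q z) (hq1 : ∑ z, q z = 1) (r : Z → ℝ)
    (hrpos : ∀ z, q z ≠ 0 → 0 < r z) {ε : ℝ} (hε0 : 0 < ε) (hε1 : ε ≤ 1) :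
    ∃ c, (Lv q r c < ε ∧ ε ≤ Lv q r c + Mvv q r c) ∧ 0 < c ∧ 0 < Mvv q r c ∧
      c ∈ Finset.image r Finset.univ := by
  classical
  have himg : (Finset.image r Finset.univ).Nonempty :=
    ⟨r (Classical.arbitrary Z), Finset.mem_image_of_mem r (Finset.mem_univ _)⟩
  set S := (Finset.image r Finset.univ).filter (fun v => Lv q r v < ε) with hS
  have hSne : S.Nonempty := by
    refine ⟨(Finset.image r Finset.univ).min' himg, Finset.mem_filter.mpr
      ⟨Finset.min'_mem _ _, ?_⟩⟩
    have : Lv q r ((Finset.image r Finset.univ).min' himg) = 0 := by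
      rw [Lv]
      refine Finset.sum_eq_zero fun z _ => ?_
      rw [if_neg (not_lt.mpr (Finset.min'_le _ _ (Finset.mem_image_of_mem r (Finset.mem_univ z))))]
    rw [this]; exact hε0
  set c := S.max' hSne with hc
  have hcS : c ∈ S := Finset.max'_mem _ _
  have hcimg : c ∈ Finset.image r Finset.univ := (Finset.mem_filter.mp hcS).1
  have hLc : Lv q r c < ε := (Finset.mem_filter.mp hcS).2
  have hUc : ε ≤ Lv q r c + Mvv q r c := by
    by_contra hlt
    push_neg at hlt
    set T := (Finset.image r Finset.univ).filter (fun v => c < v) with hT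
    rcases T.eq_empty_or_nonempty with hTe | hTne
    · have hall : ∀ z : Z, r z ≤ c := by
        intro z
        by_contra hgt
        push_neg at hgt
        have : r z ∈ T := Finset.mem_filter.mpr
          ⟨Finset.mem_image_of_mem r (Finset.mem_univ z), hgt⟩
        rw [hTe] at this
        exact absurd this (Finset.notMem_empty _)
      have : Lv q r c + Mvv q r c = 1 := by
        rw [Lv_add_Mv, ← hq1]
        exact Finset.sum_congr rfl fun z _ => by rw [if_pos (hall z)]
      rw [this] at hlt; linarith
    · set v' := T.min' hTne with hv'
      have hv'T : v' ∈ T := Finset.min'_mem _ _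
      have hcv' : c < v' := (Finset.mem_filter.mp hv'T).2
      have heq : Lv q r v' = Lv q r c + Mvv q r c := by
        rw [Lv_add_Mv, Lv]
        refine Finset.sum_congr rfl fun z _ => ?_
        congr 1
        rw [eq_iff_iff]
        constructor
        · intro hzv
          by_contra hgt
          push_neg at hgt
          have : r z ∈ T := Finset.mem_filter.mpr
            ⟨Finset.mem_image_of_mem r (Finset.mem_univ z), hgt⟩
          exact absurd (Finset.min'_le _ _ this) (not_le.mpr hzv)
        · intro hzc; exact lt_of_le_of_lt hzc hcv'
      have : v' ∈ S := Finset.mem_filter.mpr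
        ⟨(Finset.mem_filter.mp hv'T).1, by rw [heq]; exact hlt⟩
      exact absurd (Finset.le_max' _ _ this) (not_le.mpr hcv')
  have hMc : 0 < Mvv q r c := by linarith
  obtain ⟨z0, -, hz0⟩ := Finset.exists_ne_zero_of_sum_ne_zero (ne_of_gt hMc)
  have hz0' : r z0 = c ∧ q z0 ≠ 0 := by
    by_cases h : r z0 = c
    · refine ⟨h, ?_⟩; intro hq; rw [if_pos h, hq] at hz0; exact hz0 rfl
    · rw [if_neg h] at hz0; exact absurd rfl hz0
  exact ⟨c, ⟨hLc, hUc⟩, hz0'.1 ▸ hrpos z0 hz0'.2, hMc, hcimg⟩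

lemma cert_identity (hq0 : ∀ z, 0 ≤ q z) (hq1 : ∑ z, q z = 1) (B r : Z → ℝ) {c ε : ℝ}
    (hc : c ≠ 0) (hε0 : 0 ≤ ε) (hε1 : ε ≤ 1) :
    NZ q w B ε - NZ q w r ε = ∑ z, (w z - q z / c) * (uZ q B z ε - uZ q r z ε) := by
  have hB := validity hq0 hq1 B hε0 hε1
  have hr := validity hq0 hq1 r hε0 hε1
  have key : ∑ z, (w z - q z / c) * (uZ q B z ε - uZ q r z ε)
      = ((∑ z, w z * uZ q B z ε) - (∑ z, w z * uZ q r z ε))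
        - ((∑ z, q z * uZ q B z ε) - (∑ z, q z * uZ q r z ε)) / c := by
    rw [← Finset.sum_sub_distrib, ← Finset.sum_sub_distrib, Finset.sum_div,
      ← Finset.sum_sub_distrib]
    refine Finset.sum_congr rfl fun z _ => ?_
    field_simp
  rw [key, hB, hr]
  unfold NZ
  ring

lemma uZr_hi (hq0 : ∀ z, 0 ≤ q z) {c ε : ℝ}
    (hcut : Lv q r c < ε ∧ ε ≤ Lv q r c + Mvv q r c) {z : Z} (hz : c < r z) :
    uZ q r z ε = 1 := by
  refine uu_eq_one (Mv_nonneg hq0 _) ?_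
  refine le_trans hcut.2 ?_
  rw [Lv_add_Mv, Lv]
  exact sum_ite_mono q hq0 fun z' h => lt_of_le_of_lt h hz

lemma uZr_lo (hq0 : ∀ z, 0 ≤ q z) {c ε : ℝ}
    (hcut : Lv q r c < ε ∧ ε ≤ Lv q r c + Mvv q r c) {z : Z} (hz : r z < c) :
    uZ q r z ε = 0 := by
  refine uu_eq_zero (Mv_nonneg hq0 _) (lt_of_le_of_lt ?_ hcut.1)
  rw [Lv_add_Mv, Lv]
  exact sum_ite_mono q hq0 fun z' h => lt_of_le_of_lt h hz

lemma coeff_pos (hw : ∀ z, 0 < w z) (hr : ∀ z, r z = q z / w z) {c : ℝ} (hc : 0 < c)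
    {z : Z} (hz : r z < c) : 0 < w z - q z / c := by
  have h1 : q z / w z < c := by rw [← hr z]; exact hz
  have h2 : q z < c * w z := by rwa [div_lt_iff₀ (hw z)] at h1
  have : q z / c < w z := by rwa [div_lt_iff₀ hc, mul_comm]
  linarith

lemma coeff_neg (hw : ∀ z, 0 < w z) (hr : ∀ z, r z = q z / w z) {c : ℝ} (hc : 0 < c)
    {z : Z} (hz : c < r z) : w z - q z / c < 0 := by
  have h1 : c < q z / w z := by rw [← hr z]; exact hz
  have h2 : c * w z < q z := by rwa [lt_div_iff₀ (hw z)] at h1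
  have : w z < q z / c := by rwa [lt_div_iff₀ hc, mul_comm]
  linarith

lemma coeff_zero (hw : ∀ z, 0 < w z) (hr : ∀ z, r z = q z / w z) {c : ℝ} (hc : 0 < c)
    {z : Z} (hz : r z = c) : w z - q z / c = 0 := by
  have h1 : q z / w z = c := by rw [← hr z]; exact hz
  have h2 : q z = c * w z := by
    rw [← h1]
    exact (div_mul_cancel₀ (q z) (ne_of_gt (hw z))).symm
  rw [h2, mul_comm, mul_div_assoc, div_self (ne_of_gt hc), mul_one, sub_self]

lemma term_nonneg (hq0 : ∀ z, 0 ≤ q z) (hw : ∀ z, 0 < w z) (hr : ∀ z, r z = q z / w z)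
    {c ε : ℝ} (hc : 0 < c) (hcut : Lv q r c < ε ∧ ε ≤ Lv q r c + Mvv q r c)
    (B : Z → ℝ) (z : Z) :
    0 ≤ (w z - q z / c) * (uZ q B z ε - uZ q r z ε) := by
  rcases lt_trichotomy (r z) c with h | h | h
  · rw [uZr_lo hq0 hcut h, sub_zero]
    exact mul_nonneg (coeff_pos hw hr hc h).le (uu_nonneg _ _ _)
  · rw [coeff_zero hw hr hc h, zero_mul]
  · rw [uZr_hi hq0 hcut h]
    have h1 := coeff_neg hw hr hc h
    have h2 : uZ q B z ε ≤ 1 := uu_le_one _ _ _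
    nlinarith


lemma NZ_zero (q w B : Z → ℝ) (hq0 : ∀ z, 0 ≤ q z) : NZ q w B 0 = ∑ z, w z := by
  refine Finset.sum_congr rfl fun z _ => ?_
  rw [uZ, uu_eq_one (Mv_nonneg hq0 _) (Lv_nonneg hq0 _), mul_one]

/-- pointwise optimality of the CP ordering -/
lemma NZ_le [Nonempty Z] (hq0 : ∀ z, 0 ≤ q z) (hq1 : ∑ z, q z = 1) (hw : ∀ z, 0 < w z)
    (hr : ∀ z, r z = q z / w z) (B : Z → ℝ) {ε : ℝ} (hε0 : 0 ≤ ε) (hε1 : ε ≤ 1) :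
    NZ q w r ε ≤ NZ q w B ε := by
  rcases eq_or_lt_of_le hε0 with h0 | h0
  · rw [← h0, NZ_zero q w B hq0, NZ_zero q w r hq0]
  · have hrpos : ∀ z, q z ≠ 0 → 0 < r z := fun z hz => by
      rw [hr z]
      exact div_pos (lt_of_le_of_ne (hq0 z) (Ne.symm hz)) (hw z)
    obtain ⟨c, hcut, hc, -, -⟩ := exists_cut hq0 hq1 r hrpos h0 hε1
    have hid := cert_identity (w := w) hq0 hq1 B r (ne_of_gt hc) hε0 hε1
    have h2 : 0 ≤ NZ q w B ε - NZ q w r ε := by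
      rw [hid]
      exact Finset.sum_nonneg fun z _ => term_nonneg hq0 hw hr hc hcut B z
    linarith

open Classical in
lemma single_mass (hq0 : ∀ z, 0 ≤ q z) (P : Z → Prop) {z : Z} (hz : P z) :
    q z ≤ ∑ z', if P z' then q z' else 0 := by
  classical
  have h := Finset.single_le_sum (f := fun z' => if P z' then q z' else 0)
    (fun i _ => by by_cases hP : P i <;> simp [hP, hq0 i]) (Finset.mem_univ z)
  simpa only [if_pos hz] using h

/-- refinements achieve the CP value -/
lemma NZ_refines_eq [Nonempty Z] (hq0 : ∀ z, 0 ≤ q z) (hq1 : ∑ z, q z = 1)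
    (hw : ∀ z, 0 < w z) (hr : ∀ z, r z = q z / w z)
    (href : ∀ z1 z2, r z1 < r z2 → B z1 < B z2) {ε : ℝ} (hε0 : 0 ≤ ε) (hε1 : ε ≤ 1) :
    NZ q w B ε = NZ q w r ε := by
  classical
  rcases eq_or_lt_of_le hε0 with h0 | h0
  · rw [← h0, NZ_zero q w B hq0, NZ_zero q w r hq0]
  · have hrpos : ∀ z, q z ≠ 0 → 0 < r z := fun z hz => by
      rw [hr z]
      exact div_pos (lt_of_le_of_ne (hq0 z) (Ne.symm hz)) (hw z)
    obtain ⟨c, hcut, hc, -, -⟩ := exists_cut hq0 hq1 r hrpos h0 hε1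
    have hid := cert_identity (w := w) hq0 hq1 B r (ne_of_gt hc) hε0 hε1
    have hz : ∀ z : Z, (w z - q z / c) * (uZ q B z ε - uZ q r z ε) = 0 := by
      intro z
      rcases lt_trichotomy (r z) c with h | h | h
      · have hB0 : uZ q B z ε = 0 := by
          refine uu_eq_zero (Mv_nonneg hq0 _) (lt_of_le_of_lt ?_ hcut.1)
          rw [Lv_add_Mv]
          show _ ≤ Lv q r c
          unfold Lv
          refine sum_ite_mono q hq0 fun z' h' => ?_
          have hle' : r z' ≤ r z := by
            by_contra hgt
            push_neg at hgt
            exact absurd (href z z' hgt) (not_lt.mpr h')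
          exact lt_of_le_of_lt hle' h
        rw [hB0, uZr_lo hq0 hcut h, sub_zero, mul_zero]
      · rw [coeff_zero hw hr hc h, zero_mul]
      · have hB1 : uZ q B z ε = 1 := by
          refine uu_eq_one (Mv_nonneg hq0 _) (le_trans hcut.2 ?_)
          rw [Lv_add_Mv]
          show _ ≤ Lv q B (B z)
          unfold Lv
          exact sum_ite_mono q hq0 fun z' h' => href z' z (lt_of_le_of_lt h' h)
        rw [hB1, uZr_hi hq0 hcut h, sub_self, mul_zero]
    have : NZ q w B ε - NZ q w r ε = 0 := by
      rw [hid]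
      exact Finset.sum_eq_zero fun z _ => hz z
    linarith

open Classical in
/-- strict suboptimality of non-refinements, on an interval -/
lemma NZ_strict [Nonempty Z] (hq0 : ∀ z, 0 ≤ q z) (hq1 : ∑ z, q z = 1)
    (hw : ∀ z, 0 < w z) (hr : ∀ z, r z = q z / w z)
    (href : ¬ ∀ z1 z2, r z1 < r z2 → B z1 < B z2) :
    ∃ a b δ : ℝ, 0 < a ∧ a < b ∧ b ≤ 1 ∧ 0 < δ ∧
      ∀ ε ∈ Set.Icc a b, NZ q w r ε + δ ≤ NZ q w B ε := by
  classical
  push_neg at href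
  obtain ⟨z1, z2, hr12, hB12⟩ := href
  have hrpos : ∀ z, q z ≠ 0 → 0 < r z := fun z hz => by
    rw [hr z]
    exact div_pos (lt_of_le_of_ne (hq0 z) (Ne.symm hz)) (hw z)
  have hr1nn : 0 ≤ r z1 := by rw [hr z1]; exact div_nonneg (hq0 z1) (hw z1).le
  have hr2pos : 0 < r z2 := lt_of_le_of_lt hr1nn hr12
  have hq2 : 0 < q z2 := by
    by_contra h
    push_neg at h
    have hq2z : q z2 = 0 := le_antisymm h (hq0 z2)
    rw [hr z2, hq2z, zero_div] at hr2pos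
    exact lt_irrefl 0 hr2pos
  set D2 := Lv q r (r z2) with hD2
  set M2 := Mvv q r (r z2) with hM2def
  have hD2nn : 0 ≤ D2 := Lv_nonneg hq0 _
  have hM2 : q z2 ≤ M2 := single_mass hq0 _ rfl
  have hD2M2 : D2 + M2 ≤ 1 := hq1 ▸ LM_le_total hq0 (r z2)
  set U2 := ∑ z', if B z' ≤ B z2 then q z' else 0 with hU2
  have hU2q : q z2 ≤ U2 := single_mass hq0 _ (le_refl (B z2))
  have hU2le : U2 ≤ 1 := by
    rw [hU2, ← hq1]
    refine Finset.sum_le_sum fun z _ => ?_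
    split_ifs
    exacts [le_rfl, hq0 z]
  have hL1U2 : U2 ≤ Lv q B (B z1) + Mvv q B (B z1) := by
    rw [Lv_add_Mv, hU2]
    exact sum_ite_mono q hq0 fun z' h' => le_trans h' hB12
  have hU2eq : Lv q B (B z2) + Mvv q B (B z2) = U2 := Lv_add_Mv q B (B z2)
  rcases lt_or_ge D2 U2 with hcase | hcase
  · -- case (i): z1 sits too high
    set η := min U2 (D2 + M2) - D2 with hη
    have hM2pos : 0 < M2 := lt_of_lt_of_le hq2 hM2
    have hηpos : 0 < η := by
      rw [hη]
      have := lt_min hcase (show D2 < D2 + M2 by linarith)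
      linarith
    have hηM2 : η ≤ M2 := by
      rw [hη]
      have := min_le_right U2 (D2 + M2)
      linarith
    have hηU2 : η ≤ U2 - D2 := by
      rw [hη]
      have := min_le_left U2 (D2 + M2)
      linarith
    have hcoeff : 0 < w z1 - q z1 / r z2 := coeff_pos hw hr hr2pos hr12
    refine ⟨D2 + η/4, D2 + η/2, (w z1 - q z1 / r z2) * min 1 (η/2), by linarith, by linarith,
      by linarith, mul_pos hcoeff (lt_min one_pos (by linarith)), ?_⟩
    intro ε hε
    obtain ⟨hεa, hεb⟩ := hε
    have hε0 : 0 < ε := by linarith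
    have hε1 : ε ≤ 1 := by linarith
    have hcut : Lv q r (r z2) < ε ∧ ε ≤ Lv q r (r z2) + Mvv q r (r z2) :=
      ⟨by rw [← hD2]; linarith, by rw [← hD2, ← hM2def]; linarith⟩
    have hid := cert_identity (w := w) hq0 hq1 B r (ne_of_gt hr2pos) hε0.le hε1
    have hu_r : uZ q r z1 ε = 0 := uZr_lo hq0 hcut hr12
    have hM1le : Mvv q B (B z1) ≤ 1 := by
      have h1 := LM_le_total (B := B) hq0 (B z1)
      have h2 : 0 ≤ Lv q B (B z1) := Lv_nonneg hq0 _
      rw [hq1] at h1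
      linarith
    have hu_B : min 1 (η/2) ≤ uZ q B z1 ε := by
      refine le_trans ?_ (uu_ge (Mv_nonneg hq0 _) hM1le)
      exact min_le_min le_rfl (by linarith)
    have hsingle : (w z1 - q z1 / r z2) * (uZ q B z1 ε - uZ q r z1 ε)
        ≤ ∑ z, (w z - q z / r z2) * (uZ q B z ε - uZ q r z ε) :=
      Finset.single_le_sum (fun z _ => term_nonneg hq0 hw hr hr2pos hcut B z)
        (Finset.mem_univ z1)
    have hmul : (w z1 - q z1 / r z2) * min 1 (η/2)
        ≤ (w z1 - q z1 / r z2) * (uZ q B z1 ε - uZ q r z1 ε) := by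
      rw [hu_r, sub_zero]
      exact mul_le_mul_of_nonneg_left hu_B hcoeff.le
    linarith
  · -- case (ii): z2 sits too low
    obtain ⟨c0, hcut0, hc0, hM0, hc0img⟩ := exists_cut hq0 hq1 r hrpos
      (show (0:ℝ) < q z2 / 2 by linarith) (show q z2 / 2 ≤ 1 by linarith)
    have hc0lt : c0 < r z2 := by
      by_contra hge
      push_neg at hge
      have hmono : Lv q r (r z2) ≤ Lv q r c0 := by
        unfold Lv
        exact sum_ite_mono q hq0 fun z' h' => lt_of_lt_of_le h' hge
      have := hcut0.1
      rw [← hD2] at hmono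
      linarith
    set Sbar := (Finset.image r Finset.univ).filter (fun v => 0 < Mvv q r v ∧ v < r z2)
      with hSbar
    have hSne : Sbar.Nonempty := ⟨c0, Finset.mem_filter.mpr ⟨hc0img, hM0, hc0lt⟩⟩
    set cb := Sbar.max' hSne with hcb
    have hcbmem : cb ∈ Sbar := Finset.max'_mem _ _
    have hcbMv : 0 < Mvv q r cb := (Finset.mem_filter.mp hcbmem).2.1
    have hcblt : cb < r z2 := (Finset.mem_filter.mp hcbmem).2.2
    have hcbpos : 0 < cb := by
      obtain ⟨zb, -, hzb⟩ := Finset.exists_ne_zero_of_sum_ne_zero (ne_of_gt hcbMv)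
      by_cases h : r zb = cb
      · have hqzb : q zb ≠ 0 := by
          intro hq'
          rw [if_pos h, hq'] at hzb
          exact hzb rfl
        exact h ▸ hrpos zb hqzb
      · rw [if_neg h] at hzb
        exact absurd rfl hzb
    have hcoeff2 : w z2 - q z2 / cb < 0 := coeff_neg hw hr hcbpos hcblt
    refine ⟨U2 - q z2/2, U2 - q z2/4, (q z2 / cb - w z2) / 2, by linarith, by linarith,
      by linarith, by linarith, ?_⟩
    intro ε hε
    obtain ⟨hεa, hεb⟩ := hε
    have hεU2 : ε < U2 := by linarith
    have hε0 : 0 < ε := by linarith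
    have hε1 : ε ≤ 1 := by linarith
    obtain ⟨c, hcut, hc, hMc, hcimg⟩ := exists_cut hq0 hq1 r hrpos hε0 hε1
    have hclt : c < r z2 := by
      by_contra hge
      push_neg at hge
      have hmono : Lv q r (r z2) ≤ Lv q r c := by
        unfold Lv
        exact sum_ite_mono q hq0 fun z' h' => lt_of_lt_of_le h' hge
      have h1 := hcut.1
      rw [← hD2] at hmono
      -- Lv c < ε < U2 ≤ D2 ≤ Lv c
      linarith
    have hccb : c ≤ cb :=
      Finset.le_max' _ _ (Finset.mem_filter.mpr ⟨hcimg, hMc, hclt⟩)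
    have hid := cert_identity (w := w) hq0 hq1 B r (ne_of_gt hc) hε0.le hε1
    have hu_r : uZ q r z2 ε = 1 := uZr_hi hq0 hcut hclt
    have hMB2 : q z2 ≤ Mvv q B (B z2) := single_mass hq0 _ rfl
    have huB : uZ q B z2 ε ≤ 1/2 := by
      have h1 := uu_le_div (L := Lv q B (B z2)) (M := Mvv q B (B z2)) (ε := ε) hq2 hMB2
        (show ε ≤ Lv q B (B z2) + Mvv q B (B z2) by rw [hU2eq]; exact hεU2.le)
      rw [hU2eq] at h1
      refine le_trans h1 ?_
      rw [div_le_iff₀ hq2]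
      linarith
    have hsingle : (w z2 - q z2 / c) * (uZ q B z2 ε - uZ q r z2 ε)
        ≤ ∑ z, (w z - q z / c) * (uZ q B z ε - uZ q r z ε) :=
      Finset.single_le_sum (fun z _ => term_nonneg hq0 hw hr hc hcut B z)
        (Finset.mem_univ z2)
    have hkey : (q z2 / cb - w z2) / 2 ≤ (w z2 - q z2 / c) * (uZ q B z2 ε - uZ q r z2 ε) := by
      rw [hu_r]
      have e1 : q z2 / cb ≤ q z2 / c := div_le_div_of_nonneg_left hq2.le hc hccb
      have e2 : uZ q B z2 ε ≤ 1/2 := huB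
      have e3 : 0 ≤ uZ q B z2 ε := uu_nonneg _ _ _
      have e4 : (q z2 / cb - w z2) * (1/2) ≤ (q z2 / c - w z2) * (1 - uZ q B z2 ε) := by
        refine mul_le_mul (by linarith) (by linarith) (by norm_num) (by linarith)
      nlinarith [e4]
    linarith


noncomputable def Dphi (φ : ℝ → ℝ) : ℝ → ℝ := derivWithin φ (Set.Icc 0 1)

variable {φ : ℝ → ℝ}

lemma contD (hφ : ContDiffOn ℝ 1 φ (Set.Icc 0 1)) : ContinuousOn (Dphi φ) (Set.Icc 0 1) :=
  hφ.continuousOn_derivWithin (uniqueDiffOn_Icc one_pos) le_rfl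

lemma hasD (hφ : ContDiffOn ℝ 1 φ (Set.Icc 0 1)) {x : ℝ} (hx : x ∈ Set.Ioo (0:ℝ) 1) :
    HasDerivAt φ (Dphi φ x) x := by
  have hmem : Set.Icc (0:ℝ) 1 ∈ nhds x := Icc_mem_nhds hx.1 hx.2
  have hdiff : DifferentiableWithinAt ℝ φ (Set.Icc 0 1) x :=
    (hφ.differentiableOn one_ne_zero) x (Set.mem_Icc_of_Ioo hx)
  exact hdiff.hasDerivWithinAt.hasDerivAt hmem

lemma DphiInt (hφ : ContDiffOn ℝ 1 φ (Set.Icc 0 1)) {a b : ℝ} (h0 : 0 ≤ a) (hab : a ≤ b)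
    (h1 : b ≤ 1) : IntervalIntegrable (Dphi φ) volume a b := by
  refine ContinuousOn.intervalIntegrable ?_
  rw [Set.uIcc_of_le hab]
  exact (contD hφ).mono (Set.Icc_subset_Icc h0 h1)

lemma ftcD (hφ : ContDiffOn ℝ 1 φ (Set.Icc 0 1)) {a b : ℝ} (h0 : 0 ≤ a) (hab : a ≤ b)
    (h1 : b ≤ 1) : ∫ ε in a..b, Dphi φ ε = φ b - φ a := by
  refine intervalIntegral.integral_eq_sub_of_hasDeriv_right_of_le hab
    (hφ.continuousOn.mono (Set.Icc_subset_Icc h0 h1)) (fun x hx => ?_) (DphiInt hφ h0 hab h1)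
  exact (hasD hφ ⟨lt_of_le_of_lt h0 hx.1, lt_of_lt_of_le hx.2 h1⟩).hasDerivWithinAt

lemma Dnonneg (hφ : ContDiffOn ℝ 1 φ (Set.Icc 0 1)) (hφm : StrictMonoOn φ (Set.Icc 0 1))
    {x : ℝ} (hx : x ∈ Set.Icc (0:ℝ) 1) : 0 ≤ Dphi φ x := by
  have hdiff : DifferentiableWithinAt ℝ φ (Set.Icc 0 1) x :=
    (hφ.differentiableOn one_ne_zero) x hx
  have hd : HasDerivWithinAt φ (Dphi φ x) (Set.Icc 0 1) x := hdiff.hasDerivWithinAt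
  rcases lt_or_eq_of_le hx.2 with hx1 | hx1
  · -- approach from the right within Ioc x 1
    have hd' : HasDerivWithinAt φ (Dphi φ x) (Set.Ioc x 1) x :=
      hd.mono (fun t ht => ⟨le_trans hx.1 ht.1.le, ht.2⟩)
    rw [hasDerivWithinAt_iff_tendsto_slope, Set.diff_singleton_eq_self
      (fun h => lt_irrefl x (Set.mem_Ioc.mp h).1)] at hd'
    have hne : (nhdsWithin x (Set.Ioc x 1)).NeBot := left_nhdsWithin_Ioc_neBot hx1
    refine ge_of_tendsto hd' ?_
    filter_upwards [eventually_mem_nhdsWithin] with t ht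
    rw [slope_def_field]
    have h1 : φ x ≤ φ t := (hφm hx ⟨le_trans hx.1 ht.1.le, ht.2⟩ ht.1).le
    exact div_nonneg (by linarith) (by linarith [ht.1])
  · -- x = 1 : approach from the left within Ico 0 1
    subst hx1
    have hd' : HasDerivWithinAt φ (Dphi φ 1) (Set.Ico 0 1) 1 :=
      hd.mono (fun t ht => ⟨ht.1, ht.2.le⟩)
    rw [hasDerivWithinAt_iff_tendsto_slope, Set.diff_singleton_eq_self
      (fun h => lt_irrefl (1:ℝ) (Set.mem_Ico.mp h).2)] at hd'
    have hne : (nhdsWithin (1:ℝ) (Set.Ico 0 1)).NeBot := right_nhdsWithin_Ico_neBot one_pos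
    refine ge_of_tendsto hd' ?_
    filter_upwards [eventually_mem_nhdsWithin] with t ht
    rw [slope_def_field]
    have h1 : φ t ≤ φ 1 := (hφm ⟨ht.1, ht.2.le⟩ hx ht.2).le
    have h2 : t < 1 := ht.2
    exact div_nonneg_of_nonpos (by linarith) (by linarith)

lemma uuInt {L M : ℝ} (hM : 0 ≤ M) (a b : ℝ) : IntervalIntegrable (uu L M) volume a b :=
  (uu_antitone L M hM).intervalIntegrable

lemma DuuInt (hφ : ContDiffOn ℝ 1 φ (Set.Icc 0 1)) {L M : ℝ} (hM : 0 ≤ M) {a b : ℝ}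
    (h0 : 0 ≤ a) (hab : a ≤ b) (h1 : b ≤ 1) :
    IntervalIntegrable (fun ε => Dphi φ ε * uu L M ε) volume a b := by
  refine (uuInt hM a b).continuousOn_mul ?_
  rw [Set.uIcc_of_le hab]
  exact (contD hφ).mono (Set.Icc_subset_Icc h0 h1)

/-- Key identity: the `τ`-average of `φ` along the level equals
`φ 0` plus the `φ'`-weighted integral of the clamp function. -/
lemma calc1 (hφ : ContDiffOn ℝ 1 φ (Set.Icc 0 1)) {L M : ℝ} (hL : 0 ≤ L) (hM : 0 ≤ M)
    (hLM : L + M ≤ 1) :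
    ∫ τ in (0:ℝ)..1, φ (L + τ * M) = φ 0 + ∫ ε in (0:ℝ)..1, Dphi φ ε * uu L M ε := by
  have hsplit : ∫ ε in (0:ℝ)..1, Dphi φ ε * uu L M ε
      = (∫ ε in (0:ℝ)..L, Dphi φ ε * uu L M ε) + (∫ ε in L..(L+M), Dphi φ ε * uu L M ε)
        + (∫ ε in (L+M)..1, Dphi φ ε * uu L M ε) := by
    rw [integral_add_adjacent_intervals (DuuInt hφ hM le_rfl hL (by linarith))
      (DuuInt hφ hM hL (by linarith) hLM),
      integral_add_adjacent_intervals (DuuInt hφ hM le_rfl (by linarith) hLM)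
      (DuuInt hφ hM (by linarith) (by linarith) le_rfl)]
  have hpiece1 : ∫ ε in (0:ℝ)..L, Dphi φ ε * uu L M ε = φ L - φ 0 := by
    rw [← ftcD hφ le_rfl hL (by linarith)]
    refine intervalIntegral.integral_congr fun ε hε => ?_
    rw [Set.uIcc_of_le hL] at hε
    rw [uu_eq_one hM hε.2, mul_one]
  by_cases hM0 : M = 0
  · subst hM0
    have h2 : ∫ τ in (0:ℝ)..1, φ (L + τ * 0) = φ L := by
      simp
    rw [h2, hsplit, hpiece1]
    have h3 : ∫ ε in L..(L+0), Dphi φ ε * uu L 0 ε = 0 := by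
      rw [add_zero, intervalIntegral.integral_same]
    have h4 : ∫ ε in (L+0)..1, Dphi φ ε * uu L 0 ε = 0 := by
      rw [add_zero]
      have hcong : ∫ ε in L..1, Dphi φ ε * uu L 0 ε = ∫ ε in L..1, (0:ℝ) := by
        refine intervalIntegral.integral_congr_ae (MeasureTheory.ae_of_all _ fun ε hmem => ?_)
        rw [Set.uIoc_of_le (by linarith : L ≤ 1)] at hmem
        unfold uu
        rw [if_pos rfl, if_neg (not_le.mpr hmem.1), mul_zero]
      rw [hcong]
      exact intervalIntegral.integral_zero
    rw [h3, h4]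
    ring
  · have hMpos : 0 < M := lt_of_le_of_ne hM (fun e => hM0 e.symm)
    -- LHS via substitution
    have hLHS : ∫ τ in (0:ℝ)..1, φ (L + τ * M) = M⁻¹ * ∫ s in L..(L+M), φ s := by
      have h1 : (fun τ : ℝ => φ (L + τ * M)) = fun τ : ℝ => φ (M * τ + L) := by
        funext τ; ring_nf
      rw [h1, intervalIntegral.integral_comp_mul_add φ hM0 L]
      simp only [mul_zero, zero_add, mul_one, smul_eq_mul]
      rw [add_comm M L]
    -- integration by parts on the middle piece
    have hparts : ∫ ε in L..(L+M), (Dphi φ ε * (L + M - ε) - φ ε)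
        = - (φ L * M) := by
      have hG : ∫ ε in L..(L+M), (Dphi φ ε * (L + M - ε) - φ ε)
          = (fun ε => φ ε * (L + M - ε)) (L+M) - (fun ε => φ ε * (L + M - ε)) L := by
        refine intervalIntegral.integral_eq_sub_of_hasDeriv_right_of_le
          (f := fun ε => φ ε * (L + M - ε))
          (f' := fun ε => Dphi φ ε * (L + M - ε) - φ ε) (by linarith)
          ?_ (fun x hx => ?_) ?_
        · exact ((hφ.continuousOn.mono (Set.Icc_subset_Icc hL hLM)).mul
            ((continuous_const.sub continuous_id).continuousOn))
        · have hx' : x ∈ Set.Ioo (0:ℝ) 1 :=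
            ⟨lt_of_le_of_lt hL hx.1, lt_of_lt_of_le hx.2 hLM⟩
          have hd := (hasD hφ hx').mul ((hasDerivAt_id x).const_sub (L+M))
          convert hd.hasDerivWithinAt using 1
          · rfl
          · simp only [id]
            ring
        · refine ContinuousOn.intervalIntegrable ?_
          rw [Set.uIcc_of_le (by linarith : L ≤ L + M)]
          exact (((contD hφ).mono (Set.Icc_subset_Icc hL hLM)).mul
            ((continuous_const.sub continuous_id).continuousOn)).sub
            (hφ.continuousOn.mono (Set.Icc_subset_Icc hL hLM))
      rw [hG]
      show φ (L+M) * (L + M - (L+M)) - φ L * (L + M - L) = -(φ L * M)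
      ring
    have hphiInt : IntervalIntegrable φ volume L (L+M) := by
      refine ContinuousOn.intervalIntegrable ?_
      rw [Set.uIcc_of_le (by linarith : L ≤ L + M)]
      exact hφ.continuousOn.mono (Set.Icc_subset_Icc hL hLM)
    have hDaffInt : IntervalIntegrable (fun ε => Dphi φ ε * (L + M - ε)) volume L (L+M) := by
      refine ContinuousOn.intervalIntegrable ?_
      rw [Set.uIcc_of_le (by linarith : L ≤ L + M)]
      exact ((contD hφ).mono (Set.Icc_subset_Icc hL hLM)).mul
        ((continuous_const.sub continuous_id).continuousOn)
    have hparts2 : ∫ ε in L..(L+M), Dphi φ ε * (L + M - ε)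
        = (∫ s in L..(L+M), φ s) - φ L * M := by
      have := intervalIntegral.integral_sub hDaffInt hphiInt
      rw [hparts] at this
      linarith [this]
    have hpiece2 : ∫ ε in L..(L+M), Dphi φ ε * uu L M ε
        = ((∫ s in L..(L+M), φ s) - φ L * M) / M := by
      rw [← hparts2]
      have hcong : ∫ ε in L..(L+M), Dphi φ ε * uu L M ε
          = ∫ ε in L..(L+M), (Dphi φ ε * (L + M - ε)) * (1/M) := by
        refine intervalIntegral.integral_congr fun ε hε => ?_
        rw [Set.uIcc_of_le (by linarith : L ≤ L + M)] at hε
        rw [uu_mid hMpos hε.1 hε.2]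
        field_simp
      rw [hcong, intervalIntegral.integral_mul_const]
      field_simp
    have hpiece3 : ∫ ε in (L+M)..1, Dphi φ ε * uu L M ε = 0 := by
      rw [intervalIntegral.integral_congr (g := fun _ => (0:ℝ)) fun ε hε => ?_]
      · exact intervalIntegral.integral_zero
      · rw [Set.uIcc_of_le (by linarith : L + M ≤ 1)] at hε
        rw [uu_hi hMpos hε.1, mul_zero]
    rw [hLHS, hsplit, hpiece1, hpiece2, hpiece3]
    field_simp
    ring


end CPAux

section Assembly
open Finset MeasureTheory Set intervalIntegral CPAux

variable {X Y : Type*} [Fintype X] [Fintype Y] [DecidableEq Y]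

lemma pValue_eq (Q B : X × Y → ℝ) (x : X) (y : Y) (τ : ℝ) :
    pValue Q B x y τ = Lv Q B (B (x, y)) + τ * Mvv Q B (B (x, y)) := rfl

set_option maxHeartbeats 1000000 in
lemma NZInt {φ : ℝ → ℝ} (hφ : ContDiffOn ℝ 1 φ (Set.Icc 0 1)) (Q : X × Y → ℝ)
    (hQ0 : ∀ z, 0 ≤ Q z) (B : X × Y → ℝ) {a b : ℝ} (h0 : 0 ≤ a) (hab : a ≤ b) (h1 : b ≤ 1) :
    IntervalIntegrable (fun ε => Dphi φ ε * NZ Q (fun z => margX Q z.1) B ε) volume a b := by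
  have hfe : (fun ε => Dphi φ ε * NZ Q (fun z => margX Q z.1) B ε)
      = fun ε => ∑ z : X × Y, margX Q z.1 * (Dphi φ ε * uZ Q B z ε) := by
    funext ε
    rw [NZ, Finset.mul_sum]
    exact Finset.sum_congr rfl fun z _ => by ring
  rw [hfe]
  have hfn : (fun ε => ∑ z : X × Y, margX Q z.1 * (Dphi φ ε * uZ Q B z ε))
      = ∑ z : X × Y, (fun ε => margX Q z.1 * (Dphi φ ε * uZ Q B z ε)) := by
    funext ε
    rw [Finset.sum_apply]
  rw [hfn]
  refine IntervalIntegrable.sum (μ := MeasureTheory.volume) (a := a) (b := b)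
    (f := fun (z : X × Y) (ε : ℝ) => margX Q z.1 * (Dphi φ ε * uZ Q B z ε))
    Finset.univ fun z _ => ?_
  have h := (DuuInt (L := Lv Q B (B z)) (M := Mvv Q B (B z)) hφ
    (Mv_nonneg hQ0 _) h0 hab h1).const_mul (margX Q z.1)
  exact h

/-- representation of the `S_φ` objective -/
lemma repr_obj {φ : ℝ → ℝ} (hφ : ContDiffOn ℝ 1 φ (Set.Icc 0 1)) (Q : X × Y → ℝ)
    (hQ0 : ∀ z, 0 ≤ Q z) (hQ1 : ∑ z : X × Y, Q z = 1) (B : X × Y → ℝ) :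
    expXT Q (fun x τ => ∑ y, φ (pValue Q B x y τ))
      = (∑ z : X × Y, margX Q z.1) * φ 0
        + ∫ ε in (0:ℝ)..1, Dphi φ ε * NZ Q (fun z => margX Q z.1) B ε := by
  have hb : ∀ z : X × Y, 0 ≤ Lv Q B (B z) ∧ 0 ≤ Mvv Q B (B z)
      ∧ Lv Q B (B z) + Mvv Q B (B z) ≤ 1 := fun z =>
    ⟨Lv_nonneg hQ0 _, Mv_nonneg hQ0 _, hQ1 ▸ LM_le_total hQ0 _⟩
  have hInt : ∀ z : X × Y,
      IntervalIntegrable (fun τ => φ (Lv Q B (B z) + τ * Mvv Q B (B z))) volume 0 1 := by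
    intro z
    refine ContinuousOn.intervalIntegrable ?_
    rw [Set.uIcc_of_le zero_le_one]
    refine hφ.continuousOn.comp
      (continuousOn_const.add (continuousOn_id.mul continuousOn_const)) ?_
    intro τ hτ
    obtain ⟨hτ0, hτ1⟩ := hτ
    obtain ⟨hL, hM, hLM⟩ := hb z
    constructor
    · simp only []
      nlinarith
    · simp only []
      nlinarith
  have step1 : expXT Q (fun x τ => ∑ y, φ (pValue Q B x y τ))
      = ∑ z : X × Y, margX Q z.1 * ∫ τ in (0:ℝ)..1, φ (Lv Q B (B z) + τ * Mvv Q B (B z)) := by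
    rw [expXT, Fintype.sum_prod_type]
    refine Finset.sum_congr rfl fun x _ => ?_
    rw [show (fun τ : ℝ => ∑ y, φ (pValue Q B x y τ))
        = fun τ => ∑ y, φ (Lv Q B (B (x, y)) + τ * Mvv Q B (B (x, y))) from
      funext fun τ => Finset.sum_congr rfl fun y _ => by rw [pValue_eq]]
    rw [intervalIntegral.integral_finset_sum fun y _ => hInt (x, y), Finset.mul_sum]
  have step2 : ∀ z : X × Y, ∫ τ in (0:ℝ)..1, φ (Lv Q B (B z) + τ * Mvv Q B (B z))
      = φ 0 + ∫ ε in (0:ℝ)..1, Dphi φ ε * uZ Q B z ε := fun z =>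
    calc1 hφ (hb z).1 (hb z).2.1 (hb z).2.2
  rw [step1]
  have step3 : ∑ z : X × Y, margX Q z.1 * (φ 0 + ∫ ε in (0:ℝ)..1, Dphi φ ε * uZ Q B z ε)
      = (∑ z : X × Y, margX Q z.1) * φ 0
        + ∑ z : X × Y, margX Q z.1 * ∫ ε in (0:ℝ)..1, Dphi φ ε * uZ Q B z ε := by
    rw [Finset.sum_mul]
    rw [← Finset.sum_add_distrib]
    exact Finset.sum_congr rfl fun z _ => by ring
  have step4 : ∑ z : X × Y, margX Q z.1 * ∫ ε in (0:ℝ)..1, Dphi φ ε * uZ Q B z ε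
      = ∫ ε in (0:ℝ)..1, Dphi φ ε * NZ Q (fun z => margX Q z.1) B ε := by
    have h1 : ∀ z : X × Y, margX Q z.1 * ∫ ε in (0:ℝ)..1, Dphi φ ε * uZ Q B z ε
        = ∫ ε in (0:ℝ)..1, margX Q z.1 * (Dphi φ ε * uZ Q B z ε) := fun z =>
      (intervalIntegral.integral_const_mul _ _).symm
    have hIZ : ∀ z : X × Y, IntervalIntegrable
        (fun ε => margX Q z.1 * (Dphi φ ε * uZ Q B z ε)) volume 0 1 := fun z =>
      (DuuInt (L := Lv Q B (B z)) (M := Mvv Q B (B z)) hφ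
        (Mv_nonneg hQ0 _) le_rfl zero_le_one le_rfl).const_mul (margX Q z.1)
    rw [Finset.sum_congr rfl fun z _ => h1 z,
      ← intervalIntegral.integral_finset_sum fun z _ => hIZ z]
    refine intervalIntegral.integral_congr fun ε _ => ?_
    rw [NZ, Finset.mul_sum]
    exact Finset.sum_congr rfl fun z _ => by ring
  rw [Finset.sum_congr rfl fun z _ => by rw [step2 z], step3, step4]

end Assembly


open CPAux Finset MeasureTheory Set intervalIntegral in
/-- For continuously differentiable strictly increasing `φ`: `O(S_φ) = R(CP)`. -/
theorem stmt17 {X Y : Type*} [Fintype X] [Fintype Y] [DecidableEq Y] [Nonempty X]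
    (hY : 2 ≤ Fintype.card Y) (Q : X × Y → ℝ) (hQ0 : ∀ z, 0 ≤ Q z)
    (hQ1 : ∑ z : X × Y, Q z = 1) (hQX : ∀ x, 0 < margX Q x) (A : X × Y → ℝ) (φ : ℝ → ℝ)
    (hφ : ContDiffOn ℝ 1 φ (Set.Icc 0 1)) (hφm : StrictMonoOn φ (Set.Icc 0 1)) :
    (∀ B : X × Y → ℝ,
        expXT Q (fun x τ => ∑ y, φ (pValue Q A x y τ))
          ≤ expXT Q (fun x τ => ∑ y, φ (pValue Q B x y τ)))
      ↔ Refines A (condQ Q) := by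
  classical
  haveI hYne : Nonempty Y := Fintype.card_pos_iff.mp (by omega)
  haveI : Nonempty (X × Y) := ⟨(Classical.arbitrary X, Classical.arbitrary Y)⟩
  have hw : ∀ z : X × Y, 0 < (fun z : X × Y => margX Q z.1) z := fun z => hQX z.1
  have hr : ∀ z : X × Y, condQ Q z = Q z / (fun z : X × Y => margX Q z.1) z := fun z => rfl
  have hrep : ∀ B : X × Y → ℝ, expXT Q (fun x τ => ∑ y, φ (pValue Q B x y τ))
      = (∑ z : X × Y, margX Q z.1) * φ 0
        + ∫ ε in (0:ℝ)..1, Dphi φ ε * NZ Q (fun z : X × Y => margX Q z.1) B ε :=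
    fun B => repr_obj hφ Q hQ0 hQ1 B
  constructor
  · -- optimal ⟹ refinement
    intro hopt
    by_contra href
    have href' : ¬ ∀ z1 z2 : X × Y, condQ Q z1 < condQ Q z2 → A z1 < A z2 := href
    obtain ⟨a, b, δ, ha, hab, hb1, hδ, hstr⟩ :=
      NZ_strict (q := Q) (w := fun z : X × Y => margX Q z.1) (r := condQ Q) (B := A)
        hQ0 hQ1 hw hr href'
    have h1 := hopt (condQ Q)
    rw [hrep A, hrep (condQ Q)] at h1
    have h2 : ∫ ε in (0:ℝ)..1, Dphi φ ε * NZ Q (fun z : X × Y => margX Q z.1) A ε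
        ≤ ∫ ε in (0:ℝ)..1, Dphi φ ε * NZ Q (fun z : X × Y => margX Q z.1) (condQ Q) ε := by
      linarith
    have hgInt : ∀ a' b' : ℝ, 0 ≤ a' → a' ≤ b' → b' ≤ 1 →
        IntervalIntegrable (fun ε => Dphi φ ε * NZ Q (fun z : X × Y => margX Q z.1) A ε
          - Dphi φ ε * NZ Q (fun z : X × Y => margX Q z.1) (condQ Q) ε) volume a' b' :=
      fun a' b' h0 h1' h2' =>
        (NZInt hφ Q hQ0 A h0 h1' h2').sub (NZInt hφ Q hQ0 (condQ Q) h0 h1' h2')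
    have hsplit : ∫ ε in (0:ℝ)..1, (Dphi φ ε * NZ Q (fun z : X × Y => margX Q z.1) A ε
          - Dphi φ ε * NZ Q (fun z : X × Y => margX Q z.1) (condQ Q) ε)
        = (∫ ε in (0:ℝ)..a, (Dphi φ ε * NZ Q (fun z : X × Y => margX Q z.1) A ε
            - Dphi φ ε * NZ Q (fun z : X × Y => margX Q z.1) (condQ Q) ε))
          + (∫ ε in a..b, (Dphi φ ε * NZ Q (fun z : X × Y => margX Q z.1) A ε
            - Dphi φ ε * NZ Q (fun z : X × Y => margX Q z.1) (condQ Q) ε))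
          + (∫ ε in b..(1:ℝ), (Dphi φ ε * NZ Q (fun z : X × Y => margX Q z.1) A ε
            - Dphi φ ε * NZ Q (fun z : X × Y => margX Q z.1) (condQ Q) ε)) := by
      rw [integral_add_adjacent_intervals (hgInt 0 a le_rfl ha.le (by linarith))
        (hgInt a b ha.le hab.le hb1),
        integral_add_adjacent_intervals (hgInt 0 b le_rfl (by linarith) hb1)
        (hgInt b 1 (by linarith) hb1 le_rfl)]
    have hptw : ∀ ε, ε ∈ Set.Icc (0:ℝ) 1 →
        0 ≤ Dphi φ ε * NZ Q (fun z : X × Y => margX Q z.1) A ε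
          - Dphi φ ε * NZ Q (fun z : X × Y => margX Q z.1) (condQ Q) ε := fun ε hε =>
      sub_nonneg.mpr (mul_le_mul_of_nonneg_left
        (NZ_le (q := Q) (w := fun z : X × Y => margX Q z.1) (r := condQ Q)
          hQ0 hQ1 hw hr A hε.1 hε.2)
        (Dnonneg hφ hφm hε))
    have hside1 : 0 ≤ ∫ ε in (0:ℝ)..a, (Dphi φ ε * NZ Q (fun z : X × Y => margX Q z.1) A ε
        - Dphi φ ε * NZ Q (fun z : X × Y => margX Q z.1) (condQ Q) ε) :=
      intervalIntegral.integral_nonneg ha.le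
        (fun u hu => hptw u ⟨hu.1, by linarith [hu.2]⟩)
    have hside2 : 0 ≤ ∫ ε in b..(1:ℝ), (Dphi φ ε * NZ Q (fun z : X × Y => margX Q z.1) A ε
        - Dphi φ ε * NZ Q (fun z : X × Y => margX Q z.1) (condQ Q) ε) :=
      intervalIntegral.integral_nonneg hb1
        (fun u hu => hptw u ⟨by linarith [hu.1], hu.2⟩)
    have hmid : δ * (φ b - φ a)
        ≤ ∫ ε in a..b, (Dphi φ ε * NZ Q (fun z : X × Y => margX Q z.1) A ε
          - Dphi φ ε * NZ Q (fun z : X × Y => margX Q z.1) (condQ Q) ε) := by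
      have hc : ∫ ε in a..b, δ * Dphi φ ε = δ * (φ b - φ a) := by
        rw [intervalIntegral.integral_const_mul, ftcD hφ (by linarith) hab.le hb1]
      rw [← hc]
      refine intervalIntegral.integral_mono_on hab.le
        ((DphiInt hφ (by linarith) hab.le hb1).const_mul δ)
        (hgInt a b ha.le hab.le hb1) ?_
      intro ε hε
      have hIcc : ε ∈ Set.Icc (0:ℝ) 1 := ⟨by linarith [hε.1], by linarith [hε.2]⟩
      have hD := Dnonneg hφ hφm hIcc
      have hs := hstr ε hε
      calc δ * Dphi φ ε = Dphi φ ε * δ := by ring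
        _ ≤ Dphi φ ε * (NZ Q (fun z : X × Y => margX Q z.1) A ε
            - NZ Q (fun z : X × Y => margX Q z.1) (condQ Q) ε) :=
          mul_le_mul_of_nonneg_left (by linarith) hD
        _ = Dphi φ ε * NZ Q (fun z : X × Y => margX Q z.1) A ε
            - Dphi φ ε * NZ Q (fun z : X × Y => margX Q z.1) (condQ Q) ε := by ring
    have hφab : φ a < φ b := hφm ⟨ha.le, by linarith⟩ ⟨by linarith, hb1⟩ hab
    have hgpos : 0 < ∫ ε in (0:ℝ)..1, (Dphi φ ε * NZ Q (fun z : X × Y => margX Q z.1) A ε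
        - Dphi φ ε * NZ Q (fun z : X × Y => margX Q z.1) (condQ Q) ε) := by
      rw [hsplit]
      nlinarith
    have hgle : ∫ ε in (0:ℝ)..1, (Dphi φ ε * NZ Q (fun z : X × Y => margX Q z.1) A ε
        - Dphi φ ε * NZ Q (fun z : X × Y => margX Q z.1) (condQ Q) ε) ≤ 0 := by
      rw [intervalIntegral.integral_sub (NZInt hφ Q hQ0 A le_rfl zero_le_one le_rfl)
        (NZInt hφ Q hQ0 (condQ Q) le_rfl zero_le_one le_rfl)]
      linarith
    linarith
  · intro href B
    rw [hrep A, hrep B]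
    have heq : ∫ ε in (0:ℝ)..1, Dphi φ ε * NZ Q (fun z : X × Y => margX Q z.1) A ε
        = ∫ ε in (0:ℝ)..1, Dphi φ ε * NZ Q (fun z : X × Y => margX Q z.1) (condQ Q) ε := by
      refine intervalIntegral.integral_congr fun ε hε => ?_
      rw [Set.uIcc_of_le zero_le_one] at hε
      rw [NZ_refines_eq (q := Q) (w := fun z : X × Y => margX Q z.1) (r := condQ Q) (B := A)
        hQ0 hQ1 hw hr href hε.1 hε.2]
    have hle : ∫ ε in (0:ℝ)..1, Dphi φ ε * NZ Q (fun z : X × Y => margX Q z.1) (condQ Q) ε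
        ≤ ∫ ε in (0:ℝ)..1, Dphi φ ε * NZ Q (fun z : X × Y => margX Q z.1) B ε := by
      refine intervalIntegral.integral_mono_on zero_le_one
        (NZInt hφ Q hQ0 (condQ Q) le_rfl zero_le_one le_rfl)
        (NZInt hφ Q hQ0 B le_rfl zero_le_one le_rfl) fun ε hε => ?_
      exact mul_le_mul_of_nonneg_left
        (NZ_le (q := Q) (w := fun z : X × Y => margX Q z.1) (r := condQ Q)
          hQ0 hQ1 hw hr B hε.1 hε.2)
        (Dnonneg hφ hφm hε)
    linarith
end
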